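/- Let E be a real inner product space, let Δ : E → E and let g : E → ℝ be a convex function such that g has gradient Δ(x) at every point x ∈ E, with g(x) ≥ 0 for all x and g(0) = 0. Fix ρ ∈ (0,1] and a sequence y : ℕ → E. Let h : ℕ → ℝ satisfy h_k ≥ 0 for all k, with the sequence (ρ^{-2k} h_k) summable and ∑_{k=0}^{∞} ρ^{-2k} h_k ≤ 1. Then for every T ∈ ℕ, ∑_{k=0}^{T} ρ^{-2k} ⟨Δ(y_k), y_k − ∑_{i=0}^{k} h_i y_{k−i}⟩ ≥ 0. -/

import Mathlib

open RealInnerProductSpace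

/-- Gradient inequality for a convex function on a real inner product space. -/
lemma grad_ineq_aux
    {E : Type*} [NormedAddCommGroup E] [InnerProductSpace ℝ E]
    (Δ : E → E) (g : E → ℝ)
    (hconv : ConvexOn ℝ Set.univ g)
    (hgrad : ∀ x : E, HasFDerivAt g (innerSL ℝ (Δ x)) x)
    (x z : E) : g x + ⟪Δ x, z - x⟫ ≤ g z := by
  set φ : ℝ → ℝ := fun t => g (x + t • (z - x)) with hφ
  have hφconv : ConvexOn ℝ Set.univ φ := by
    have := hconv.comp_affineMap (AffineMap.lineMap x z)
    simp only [Set.preimage_univ] at this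
    have hfeq : φ = g ∘ (AffineMap.lineMap (k := ℝ) x z) := by
      funext t
      simp only [φ, Function.comp, AffineMap.lineMap_apply_module]
      congr 1
      module
    rw [hfeq]; exact this
  have hline : HasDerivAt (fun t : ℝ => x + t • (z - x)) (z - x) 0 := by
    simpa using ((hasDerivAt_id (0 : ℝ)).smul_const (z - x)).const_add x
  have hφderiv : HasDerivAt φ ⟪Δ x, z - x⟫ 0 := by
    have hg : HasFDerivAt g (innerSL ℝ (Δ x)) (x + (0 : ℝ) • (z - x)) := by
      simpa using hgrad x
    have h3 := hg.comp_hasDerivAt 0 hline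
    simp at h3
    exact h3
  have hslope := hφconv.le_slope_of_hasDerivAt (Set.mem_univ (0 : ℝ))
    (Set.mem_univ (1 : ℝ)) one_pos hφderiv
  have : slope φ 0 1 = φ 1 - φ 0 := by simp [slope_def_field]
  rw [this] at hslope
  have h0 : φ 0 = g x := by simp [φ]
  have h1 : φ 1 = g z := by simp [φ]
  rw [h0, h1] at hslope
  linarith

/-- General Zames–Falb ρ-IQC (time domain) for a monotone gradient nonlinearity:
if the impulse response `h` is nonnegative and satisfies the ρ-weighted ℓ1 constraint
`∑_{k} ρ^{-2k} h_k ≤ 1`, then every partial sum of the weighted IQC expression is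
nonnegative.  Here `∑_{i=0}^{k} h_i y_{k−i}` is the truncated convolution of `h` with `y`. -/
theorem general_zames_falb_rho_iqc
    {E : Type*} [NormedAddCommGroup E] [InnerProductSpace ℝ E]
    (Δ : E → E) (g : E → ℝ)
    (hconv : ConvexOn ℝ Set.univ g)
    (hgrad : ∀ x : E, HasFDerivAt g (innerSL ℝ (Δ x)) x)
    (hg_nonneg : ∀ x : E, 0 ≤ g x) (hg_zero : g 0 = 0)
    (ρ : ℝ) (hρ : ρ ∈ Set.Ioc (0 : ℝ) 1)
    (y : ℕ → E)
    (h : ℕ → ℝ) (hh_nonneg : ∀ k : ℕ, 0 ≤ h k)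
    (hh_summable : Summable (fun k : ℕ => ρ ^ (-(2 * (k : ℤ))) * h k))
    (hh_l1 : (∑' k : ℕ, ρ ^ (-(2 * (k : ℤ))) * h k) ≤ 1)
    (T : ℕ) :
    0 ≤ ∑ k ∈ Finset.range (T + 1),
        ρ ^ (-(2 * (k : ℤ))) *
          ⟪Δ (y k), y k - ∑ i ∈ Finset.range (k + 1), h i • y (k - i)⟫ := by
  obtain ⟨hρ0, hρ1⟩ := hρ
  set w : ℕ → ℝ := fun j => ρ ^ (-(2 * (j : ℤ))) with hw
  have hw_pos : ∀ j, 0 < w j := fun j => zpow_pos hρ0 _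
  have hw_one : ∀ j, 1 ≤ w j := by
    intro j
    have hpow : ρ ^ (2 * j) ≤ 1 := pow_le_one₀ hρ0.le hρ1
    have hpow0 : 0 < ρ ^ (2 * j) := pow_pos hρ0 _
    have heq : w j = (ρ ^ (2 * j))⁻¹ := by
      rw [hw]
      simp only [zpow_neg]
      norm_cast
    rw [heq]
    exact one_le_inv_iff₀.mpr ⟨hpow0, hpow⟩
  -- partial sums of weighted h are ≤ 1
  have hpartial : ∀ s : Finset ℕ, ∑ i ∈ s, w i * h i ≤ 1 := by
    intro s
    exact le_trans (hh_summable.sum_le_tsum s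
      (fun i _ => mul_nonneg (hw_pos i).le (hh_nonneg i))) hh_l1
  have hpartial' : ∀ s : Finset ℕ, ∑ i ∈ s, h i ≤ 1 := by
    intro s
    refine le_trans (Finset.sum_le_sum fun i _ => ?_) (hpartial s)
    nlinarith [hw_one i, hh_nonneg i]
  -- gradient inequality
  have hgi : ∀ x z : E, g x - g z ≤ ⟪Δ x, x - z⟫ := by
    intro x z
    have := grad_ineq_aux Δ g hconv hgrad x z
    have hxz : ⟪Δ x, x - z⟫ = -⟪Δ x, z - x⟫ := by
      rw [← inner_neg_right]; congr 1; abel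
    rw [hxz]
    linarith
  -- per-k lower bound for the inner product
  have hk_bound : ∀ k : ℕ,
      g (y k) - ∑ i ∈ Finset.range (k + 1), h i * g (y (k - i))
        ≤ ⟪Δ (y k), y k - ∑ i ∈ Finset.range (k + 1), h i • y (k - i)⟫ := by
    intro k
    set x := y k
    set S := ∑ i ∈ Finset.range (k + 1), h i with hS
    have hdecomp : x - ∑ i ∈ Finset.range (k + 1), h i • y (k - i)
        = (∑ i ∈ Finset.range (k + 1), h i • (x - y (k - i))) + (1 - S) • x := by
      simp only [smul_sub, Finset.sum_sub_distrib, ← Finset.sum_smul, sub_smul, one_smul, hS]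
      abel
    rw [hdecomp, inner_add_right, inner_sum, inner_smul_right]
    have h1 : ∀ i ∈ Finset.range (k + 1),
        h i * (g x - g (y (k - i))) ≤ ⟪Δ x, h i • (x - y (k - i))⟫ := by
      intro i _
      rw [inner_smul_right]
      exact mul_le_mul_of_nonneg_left (hgi x (y (k - i))) (hh_nonneg i)
    have h2 : (1 - S) * g x ≤ (1 - S) * ⟪Δ x, x⟫ := by
      have hx : g x ≤ ⟪Δ x, x⟫ := by
        have := hgi x 0
        simpa [hg_zero] using this
      have hS1 : S ≤ 1 := hpartial' _
      exact mul_le_mul_of_nonneg_left hx (by linarith)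
    calc g x - ∑ i ∈ Finset.range (k + 1), h i * g (y (k - i))
        = (∑ i ∈ Finset.range (k + 1), h i * (g x - g (y (k - i)))) + (1 - S) * g x := by
          simp [mul_sub, Finset.sum_sub_distrib, ← Finset.sum_mul, hS]; ring
      _ ≤ (∑ i ∈ Finset.range (k + 1), ⟪Δ x, h i • (x - y (k - i))⟫) + (1 - S) * ⟪Δ x, x⟫ :=
          add_le_add (Finset.sum_le_sum h1) h2
  -- weighted functions
  set G : ℕ → ℝ := fun j => w j * g (y j) with hG
  have hG_nonneg : ∀ j, 0 ≤ G j := fun j => mul_nonneg (hw_pos j).le (hg_nonneg _)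
  -- the weight splits multiplicatively over the convolution index
  have hw_split : ∀ i k : ℕ, i ≤ k → w k = w i * w (k - i) := by
    intro i k hik
    rw [hw]
    simp only
    rw [← zpow_add₀ (ne_of_gt hρ0)]
    congr 1
    omega
  -- the double-sum bound
  have hdouble : ∑ k ∈ Finset.range (T + 1), ∑ i ∈ Finset.range (k + 1),
      (w i * h i) * G (k - i) ≤ ∑ j ∈ Finset.range (T + 1), G j := by
    have hswap : ∑ k ∈ Finset.range (T + 1), ∑ i ∈ Finset.range (k + 1),
        (w i * h i) * G (k - i)
        = ∑ i ∈ Finset.range (T + 1), ∑ k ∈ Finset.Ico i (T + 1),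
            (w i * h i) * G (k - i) := by
      have := Finset.sum_Ico_Ico_comm 0 (T + 1) (fun i k => (w i * h i) * G (k - i))
      simp only [Finset.range_eq_Ico] at *
      rw [← this]
    rw [hswap]
    have hinner : ∀ i ∈ Finset.range (T + 1),
        ∑ k ∈ Finset.Ico i (T + 1), (w i * h i) * G (k - i)
          ≤ (w i * h i) * ∑ j ∈ Finset.range (T + 1), G j := by
      intro i _
      rw [← Finset.mul_sum]
      refine mul_le_mul_of_nonneg_left ?_ (mul_nonneg (hw_pos i).le (hh_nonneg i))
      rw [Finset.sum_Ico_eq_sum_range]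
      simp only [Nat.add_sub_cancel_left]
      exact Finset.sum_le_sum_of_subset_of_nonneg
        (Finset.range_subset_range.mpr (by omega)) (fun j _ _ => hG_nonneg j)
    calc ∑ i ∈ Finset.range (T + 1), ∑ k ∈ Finset.Ico i (T + 1), (w i * h i) * G (k - i)
        ≤ ∑ i ∈ Finset.range (T + 1), (w i * h i) * ∑ j ∈ Finset.range (T + 1), G j :=
          Finset.sum_le_sum hinner
      _ = (∑ i ∈ Finset.range (T + 1), w i * h i) * ∑ j ∈ Finset.range (T + 1), G j := by
          rw [Finset.sum_mul]
      _ ≤ 1 * ∑ j ∈ Finset.range (T + 1), G j := by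
          exact mul_le_mul_of_nonneg_right (hpartial _)
            (Finset.sum_nonneg fun j _ => hG_nonneg j)
      _ = ∑ j ∈ Finset.range (T + 1), G j := one_mul _
  -- put everything together
  have hmain : ∑ k ∈ Finset.range (T + 1), G k
      - ∑ k ∈ Finset.range (T + 1), ∑ i ∈ Finset.range (k + 1), (w i * h i) * G (k - i)
      ≤ ∑ k ∈ Finset.range (T + 1),
          w k * ⟪Δ (y k), y k - ∑ i ∈ Finset.range (k + 1), h i • y (k - i)⟫ := by
    rw [← Finset.sum_sub_distrib]
    refine Finset.sum_le_sum fun k hk => ?_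
    have hrw : ∀ i ∈ Finset.range (k + 1),
        (w i * h i) * G (k - i) = w k * (h i * g (y (k - i))) := by
      intro i hi
      rw [hw_split i k (by simpa using Nat.lt_succ_iff.mp (Finset.mem_range.mp hi))]
      simp [hG]; ring
    rw [Finset.sum_congr rfl hrw, ← Finset.mul_sum, hG]
    rw [← mul_sub]
    exact mul_le_mul_of_nonneg_left (hk_bound k) (hw_pos k).le
  linarith [hdouble, hmain]
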